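/- For Re(c-a-b) > 0, Re(c) > Re(b) > 0 and 0 < y < 1: ₂F₁(a,[b,c;y];1) = Γ(c)Γ(c-a-b)/(Γ(c-a)Γ(c-b)) − ((1-y)^{c-b-a} y^b / (B(b,c-b)(c-a-b))) · ₂F₁(c-a, 1; 1+c-b-a; 1-y). -/

import Mathlib

open Complex
open Filter Topology

/-- Incomplete beta function `B_y(x,z) = ∫_0^y t^(x-1) (1-t)^(z-1) dt`. -/
noncomputable def incBeta (y : ℝ) (x z : ℂ) : ℂ :=
  ∫ t in (0:ℝ)..y, (t:ℂ)^(x-1) * (1 - (t:ℂ))^(z-1)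

/-- Pochhammer symbol `(a)_n`. -/
noncomputable def poch (a : ℂ) (n : ℕ) : ℂ := ∏ i ∈ Finset.range n, (a + i)

/-- Incomplete Pochhammer ratio `[b,c;y]_n`. -/
noncomputable def ipochL (b c : ℂ) (y : ℝ) (n : ℕ) : ℂ :=
  incBeta y (b + n) (c - b) / Complex.betaIntegral b (c - b)

/-- Incomplete Pochhammer ratio `{b,c;y}_n`. -/
noncomputable def ipochU (b c : ℂ) (y : ℝ) (n : ℕ) : ℂ :=
  incBeta (1 - y) (c - b) (b + n) / Complex.betaIntegral b (c - b)

/-- Gauss hypergeometric series `₂F₁(a,b;c;x)`. -/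
noncomputable def hyp2F1 (a b c x : ℂ) : ℂ :=
  ∑' n : ℕ, poch a n * poch b n / poch c n * x^n / (n.factorial : ℂ)

/-- Incomplete Gauss hypergeometric function `₂F₁(a,[b,c;y];x)`. -/
noncomputable def inc2F1L (a b c : ℂ) (y : ℝ) (x : ℂ) : ℂ :=
  ∑' n : ℕ, poch a n * ipochL b c y n * x^n / (n.factorial : ℂ)

/-- Incomplete Gauss hypergeometric function `₂F₁(a,{b,c;y};x)`. -/
noncomputable def inc2F1U (a b c : ℂ) (y : ℝ) (x : ℂ) : ℂ :=
  ∑' n : ℕ, poch a n * ipochU b c y n * x^n / (n.factorial : ℂ)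

/-- Incomplete confluent hypergeometric function `₁F₁([a,b;y];x)`. -/
noncomputable def inc1F1L (a b : ℂ) (y : ℝ) (x : ℂ) : ℂ :=
  ∑' n : ℕ, ipochL a b y n * x^n / (n.factorial : ℂ)

/-- Incomplete confluent hypergeometric function `₁F₁({a,b;y};x)`. -/
noncomputable def inc1F1U (a b : ℂ) (y : ℝ) (x : ℂ) : ℂ :=
  ∑' n : ℕ, ipochU a b y n * x^n / (n.factorial : ℂ)

/-- Incomplete Appell function `F₁[a,b,c;d;x,z;y]`. -/
noncomputable def incAppellF1 (a b c d x z : ℂ) (y : ℝ) : ℂ :=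
  ∑' p : ℕ × ℕ, ipochL a d y (p.1 + p.2) * poch b p.1 * poch c p.2 *
    x^p.1 * z^p.2 / ((p.1.factorial : ℂ) * (p.2.factorial : ℂ))

/-- Incomplete Riemann–Liouville fractional derivative `D_z^μ[f(z);y]`. -/
noncomputable def incRL (μ : ℂ) (f : ℂ → ℂ) (y : ℝ) (z : ℂ) : ℂ :=
  z^(-μ) / Complex.Gamma (-μ) * ∫ u in (0:ℝ)..y, f ((u:ℂ) * z) * (1 - (u:ℂ))^(-μ-1)

lemma poch_zero (a : ℂ) : poch a 0 = 1 := Finset.prod_range_zero _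

lemma poch_succ (a : ℂ) (n : ℕ) : poch a (n+1) = poch a n * (a + n) :=
  Finset.prod_range_succ _ _

lemma poch_succ' (a : ℂ) (n : ℕ) : poch a (n+1) = a * poch (a+1) n := by
  rw [poch, Finset.prod_range_succ']
  simp [poch, add_assoc, add_comm (1:ℂ)]
  ring_nf

lemma poch_one (n : ℕ) : poch 1 n = n.factorial := by
  induction n with
  | zero => simp [poch_zero]
  | succ n ih => rw [poch_succ, ih]; push_cast [Nat.factorial_succ]; ring

lemma poch_ne_zero {a : ℂ} (ha : 0 < a.re) (n : ℕ) : poch a n ≠ 0 := by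
  rw [poch]
  apply Finset.prod_ne_zero_iff.2
  intro i _
  intro h
  have : (a + i).re = 0 := by rw [h]; simp
  simp only [Complex.add_re, Complex.natCast_re] at this
  have : 0 < a.re + i := by positivity
  linarith [this]

/-- real auxiliary pochhammer -/
noncomputable def rpoch (r : ℝ) (n : ℕ) : ℝ := ∏ i ∈ Finset.range n, (r + i)

lemma rpoch_pos {r : ℝ} (hr : 0 < r) (n : ℕ) : 0 < rpoch r n := by
  apply Finset.prod_pos; intro i _; positivity

lemma norm_poch_le (a : ℂ) (n : ℕ) : ‖poch a n‖ ≤ rpoch (‖a‖ + 1) n := by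
  rw [poch, rpoch]
  rw [norm_prod]
  apply Finset.prod_le_prod (fun i _ => norm_nonneg _)
  intro i _
  refine le_trans (norm_add_le _ _) ?_
  simp

lemma rpoch_succ (r : ℝ) (n : ℕ) : rpoch r (n+1) = rpoch r n * (r + n) :=
  Finset.prod_range_succ _ _

lemma rpoch_mono {M : ℝ} (hM : 1 ≤ M) (n : ℕ) : rpoch M n ≤ rpoch M (n+1) := by
  rw [rpoch_succ]
  nth_rewrite 1 [← mul_one (rpoch M n)]
  apply mul_le_mul_of_nonneg_left _ (rpoch_pos (by linarith) n).le
  have : (0:ℝ) ≤ (n:ℝ) := Nat.cast_nonneg n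
  linarith

lemma summable_aux {M r : ℝ} (hM : 1 ≤ M) (h0 : 0 < r) (h1 : r < 1) :
    Summable (fun n => rpoch M (n+1) * r^n / n.factorial) := by
  have hMpos : (0:ℝ) < M := by linarith
  apply summable_of_ratio_test_tendsto_lt_one h1
  · filter_upwards with n
    have := rpoch_pos hMpos (n+1)
    have hf : (0:ℝ) < (n.factorial : ℝ) := by positivity
    positivity
  · have key : ∀ n : ℕ, ‖rpoch M (n+1+1) * r^(n+1) / (n+1).factorial‖ /
        ‖rpoch M (n+1) * r^n / n.factorial‖ = (M + (n+1)) * r / (n+1) := by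
      intro n
      have h2 : rpoch M (n+1+1) = rpoch M (n+1) * (M + (n+1)) := by
        rw [rpoch_succ]; push_cast; ring
      have hp := rpoch_pos hMpos (n+1)
      have hf : (0:ℝ) < (n.factorial : ℝ) := by positivity
      rw [h2, Real.norm_eq_abs, Real.norm_eq_abs, abs_of_pos (by positivity),
        abs_of_pos (by positivity), Nat.factorial_succ]
      push_cast
      field_simp
      ring
    simp_rw [key]
    have h3 : Tendsto (fun n : ℕ => M / ((n:ℝ)+1)) atTop (𝓝 0) := by
      apply Tendsto.div_atTop tendsto_const_nhds
      exact tendsto_atTop_add_const_right _ _ tendsto_natCast_atTop_atTop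
    have h4 : Tendsto (fun n : ℕ => (1 + M / ((n:ℝ)+1)) * r) atTop (𝓝 r) := by
      have := (h3.const_add 1).mul_const r
      simpa using this
    refine h4.congr (fun n => ?_)
    have : ((n:ℝ)+1) ≠ 0 := by positivity
    field_simp
    ring

lemma summable_norm_poch (a : ℂ) {r : ℝ} (h0 : 0 < r) (h1 : r < 1) :
    Summable (fun n => ‖poch a n‖ * r^n / n.factorial) := by
  have hM : (1:ℝ) ≤ ‖a‖ + 1 := by linarith [norm_nonneg a]
  refine Summable.of_nonneg_of_le (fun n => by positivity) (fun n => ?_)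
    (summable_aux hM h0 h1)
  have h2 : ‖poch a n‖ ≤ rpoch (‖a‖+1) (n+1) :=
    le_trans (norm_poch_le a n) (rpoch_mono hM n)
  gcongr

lemma summable_norm_poch_succ (a : ℂ) {r : ℝ} (h0 : 0 < r) (h1 : r < 1) :
    Summable (fun n => ‖poch a (n+1)‖ * r^n / n.factorial) := by
  have hM : (1:ℝ) ≤ ‖a‖ + 1 := by linarith [norm_nonneg a]
  refine Summable.of_nonneg_of_le (fun n => by positivity) (fun n => ?_)
    (summable_aux hM h0 h1)
  have h2 : ‖poch a (n+1)‖ ≤ rpoch (‖a‖+1) (n+1) := norm_poch_le a (n+1)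
  gcongr

section Binomial

/-- The sum of the binomial series. -/
noncomputable def binF (a z : ℂ) : ℂ := ∑' n, poch a n * z^n / (n.factorial : ℂ)

/-- shifted (derivative) series -/
noncomputable def binD (a z : ℂ) : ℂ := ∑' n, poch a (n+1) * z^n / (n.factorial : ℂ)

lemma summable_norm_bin (a : ℂ) {z : ℂ} (hz : ‖z‖ < 1) :
    Summable (fun n => ‖poch a n * z^n / (n.factorial : ℂ)‖) := by
  set r : ℝ := (‖z‖ + 1)/2 with hr
  have h0 : 0 < r := by have := norm_nonneg z; rw [hr]; linarith
  have h1 : r < 1 := by rw [hr]; linarith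
  have hzr : ‖z‖ ≤ r := by rw [hr]; linarith
  refine Summable.of_nonneg_of_le (fun n => norm_nonneg _) (fun n => ?_)
    (summable_norm_poch a h0 h1)
  rw [norm_div, norm_mul, norm_pow, Complex.norm_natCast]
  gcongr <;> first | positivity | exact hzr

lemma summable_bin (a : ℂ) {z : ℂ} (hz : ‖z‖ < 1) :
    Summable (fun n => poch a n * z^n / (n.factorial : ℂ)) :=
  (summable_norm_bin a hz).of_norm

lemma summable_norm_binD (a : ℂ) {z : ℂ} (hz : ‖z‖ < 1) :
    Summable (fun n => ‖poch a (n+1) * z^n / (n.factorial : ℂ)‖) := by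
  set r : ℝ := (‖z‖ + 1)/2 with hr
  have h0 : 0 < r := by have := norm_nonneg z; rw [hr]; linarith
  have h1 : r < 1 := by rw [hr]; linarith
  have hzr : ‖z‖ ≤ r := by rw [hr]; linarith
  refine Summable.of_nonneg_of_le (fun n => norm_nonneg _) (fun n => ?_)
    (summable_norm_poch_succ a h0 h1)
  rw [norm_div, norm_mul, norm_pow, Complex.norm_natCast]
  gcongr <;> first | positivity | exact hzr

lemma summable_binD (a : ℂ) {z : ℂ} (hz : ‖z‖ < 1) :
    Summable (fun n => poch a (n+1) * z^n / (n.factorial : ℂ)) :=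
  (summable_norm_binD a hz).of_norm

lemma hasDerivAt_binF (a : ℂ) {x : ℂ} (hx : ‖x‖ < 1) :
    HasDerivAt (binF a) (binD a x) x := by
  set r : ℝ := (‖x‖ + 1)/2 with hr
  have h0 : 0 < r := by have := norm_nonneg x; rw [hr]; linarith
  have h1 : r < 1 := by rw [hr]; linarith
  have hxr : ‖x‖ < r := by rw [hr]; linarith
  set M : ℝ := ‖a‖ + 1 with hM
  have hM1 : (1:ℝ) ≤ M := by rw [hM]; linarith [norm_nonneg a]
  set u : ℕ → ℝ := fun n => rpoch M n * ((n:ℝ) * r^(n-1)) / n.factorial with hu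
  have hu_s : Summable u := by
    rw [← summable_nat_add_iff 1]
    refine (summable_aux hM1 h0 h1).congr (fun n => ?_)
    rw [hu]
    simp only [Nat.add_sub_cancel, Nat.factorial_succ]
    have hf : (0:ℝ) < (n.factorial : ℝ) := by positivity
    push_cast
    field_simp
  set g : ℕ → ℂ → ℂ := fun n z => poch a n * z^n / (n.factorial : ℂ) with hg
  set g' : ℕ → ℂ → ℂ := fun n z => poch a n * ((n:ℂ) * z^(n-1)) / (n.factorial : ℂ) with hg'
  have hderiv : ∀ n z, z ∈ Metric.ball (0:ℂ) r → HasDerivAt (g n) (g' n z) z := by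
    intro n z _
    exact ((hasDerivAt_pow n z).const_mul (poch a n)).div_const _
  have hbound : ∀ n z, z ∈ Metric.ball (0:ℂ) r → ‖g' n z‖ ≤ u n := by
    intro n z hzball
    rw [Metric.mem_ball, dist_zero_right] at hzball
    rw [hg', hu]
    simp only [norm_div, norm_mul, norm_pow, Complex.norm_natCast]
    have hf : (0:ℝ) < (n.factorial : ℝ) := by positivity
    have hMpos : (0:ℝ) < M := by linarith
    gcongr <;> first | positivity | exact (rpoch_pos hMpos n).le | exact norm_poch_le a n | exact hzball.le
  have key := hasDerivAt_tsum_of_isPreconnected hu_s Metric.isOpen_ball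
    (convex_ball (0:ℂ) r).isPreconnected hderiv hbound
    (by simp [h0] : (0:ℂ) ∈ Metric.ball (0:ℂ) r)
    (by simpa using summable_bin a (by simp [h0] : ‖(0:ℂ)‖ < 1))
    (by simpa using hxr : x ∈ Metric.ball (0:ℂ) r)
  have hsum_g' : Summable (fun n => g' n x) := by
    refine Summable.of_norm (Summable.of_nonneg_of_le (fun n => norm_nonneg _)
      (fun n => hbound n x (by simpa using hxr)) hu_s)
  have hshift : ∑' n, g' n x = binD a x := by
    rw [Summable.tsum_eq_zero_add hsum_g']
    have hzero : g' 0 x = 0 := by simp [hg']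
    rw [hzero, zero_add, binD]
    congr 1
    funext n
    rw [hg']
    simp only [Nat.add_sub_cancel, Nat.factorial_succ]
    have hf : ((n.factorial : ℂ)) ≠ 0 := by exact_mod_cast Nat.factorial_ne_zero n
    have hn1 : ((n:ℂ) + 1) ≠ 0 := Nat.cast_add_one_ne_zero n
    push_cast
    field_simp
  rw [← hshift]
  exact key

end Binomial

lemma binF_ode (a : ℂ) {x : ℂ} (hx : ‖x‖ < 1) :
    (1 - x) * binD a x = a * binF a x := by
  have hF : HasSum (fun n => poch a n * x^n / (n.factorial : ℂ)) (binF a x) :=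
    (summable_bin a hx).hasSum
  have hD : HasSum (fun n => poch a (n+1) * x^n / (n.factorial : ℂ)) (binD a x) :=
    (summable_binD a hx).hasSum
  set e : ℕ → ℂ := fun n => (n:ℂ) * (poch a n * x^n / (n.factorial : ℂ)) with he
  have hterm : ∀ n : ℕ, x * (poch a (n+1) * x^n / (n.factorial : ℂ)) = e (n+1) := by
    intro n
    rw [he]
    simp only [Nat.factorial_succ, pow_succ]
    have hf : ((n.factorial : ℂ)) ≠ 0 := by exact_mod_cast Nat.factorial_ne_zero n
    have hn1 : ((n:ℂ) + 1) ≠ 0 := Nat.cast_add_one_ne_zero n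
    push_cast
    field_simp
  have hxD : HasSum (fun n => e (n+1)) (x * binD a x) := by
    have h1 := hD.mul_left x
    simpa only [hterm] using h1
  have he_sum : HasSum e (x * binD a x) := by
    have h2 := (hasSum_nat_add_iff (f := e) 1).mp hxD
    simpa [he] using h2
  have hsub := hD.sub he_sum
  have hterm2 : ∀ n : ℕ, poch a (n+1) * x^n / (n.factorial:ℂ) - e n
      = a * (poch a n * x^n / (n.factorial:ℂ)) := by
    intro n
    rw [poch_succ, he]
    have hf : ((n.factorial : ℂ)) ≠ 0 := by exact_mod_cast Nat.factorial_ne_zero n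
    field_simp
    ring
  simp only [hterm2] at hsub
  have := hsub.unique (hF.mul_left a)
  linear_combination this

theorem hasSum_binomial (a : ℂ) {x : ℝ} (h0 : 0 ≤ x) (h1 : x < 1) :
    HasSum (fun n => poch a n * (x:ℂ)^n / (n.factorial : ℂ)) ((1 - (x:ℂ))^(-a)) := by
  have hlt : ∀ t : ℝ, t ∈ Set.Icc 0 x → ‖((t:ℂ))‖ < 1 := by
    intro t ht
    rw [Complex.norm_real, Real.norm_eq_abs, _root_.abs_of_nonneg ht.1]
    linarith [ht.2]
  have hne : ∀ t : ℝ, t ∈ Set.Icc 0 x → (1 - (t:ℂ)) ≠ 0 := by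
    intro t ht h
    have h2 : (1 - (t:ℂ)).re = 0 := by rw [h]; simp
    simp only [Complex.sub_re, Complex.one_re, Complex.ofReal_re] at h2
    linarith [ht.2, h1]
  set φ : ℝ → ℂ := fun t => (1 - (t:ℂ))^a * binF a t with hφ
  have hderiv : ∀ t : ℝ, t ∈ Set.Icc 0 x → HasDerivAt φ 0 t := by
    intro t ht
    have hre : 0 < (1 - (t:ℂ)).re := by
      simp only [Complex.sub_re, Complex.one_re, Complex.ofReal_re]
      linarith [ht.2, h1]
    have hslit : (1 - (t:ℂ)) ∈ Complex.slitPlane := by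
      rw [Complex.mem_slitPlane_iff]; left; exact hre
    have hin : HasDerivAt (fun z : ℂ => 1 - z) (-1 : ℂ) (t:ℂ) := by
      simpa using (hasDerivAt_id (t:ℂ)).const_sub 1
    have hcp : HasDerivAt (fun z : ℂ => (1 - z)^a)
        (a * (1 - (t:ℂ))^(a-1) * (-1)) (t:ℂ) := hin.cpow_const hslit
    have hcpR : HasDerivAt (fun s : ℝ => (1 - (s:ℂ))^a)
        (a * (1 - (t:ℂ))^(a-1) * (-1)) t := hcp.comp_ofReal
    have hFR : HasDerivAt (fun s : ℝ => binF a s) (binD a t) t :=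
      (hasDerivAt_binF a (hlt t ht)).comp_ofReal
    have hprod := hcpR.mul hFR
    have hzero : a * (1 - (t:ℂ))^(a-1) * (-1) * binF a t
        + (1 - (t:ℂ))^a * binD a t = 0 := by
      have hsplit : (1 - (t:ℂ))^a = (1 - (t:ℂ))^(a-1) * (1 - (t:ℂ)) := by
        have h := Complex.cpow_add (a-1) 1 (hne t ht)
        rw [Complex.cpow_one, sub_add_cancel] at h
        exact h
      rw [hsplit]
      have hode := binF_ode a (hlt t ht)
      calc a * (1 - (t:ℂ))^(a-1) * (-1) * binF a t
            + (1 - (t:ℂ))^(a-1) * (1 - (t:ℂ)) * binD a t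
          = (1 - (t:ℂ))^(a-1) * ((1 - (t:ℂ)) * binD a t - a * binF a t) := by ring
        _ = 0 := by rw [hode]; ring
    rw [hzero] at hprod
    exact hprod
  have hconst := constant_of_has_deriv_right_zero
    (fun t ht => (hderiv t ht).continuousAt.continuousWithinAt)
    (fun t ht => ((hderiv t (Set.mem_Icc_of_Ico ht)).hasDerivWithinAt))
    x (Set.right_mem_Icc.2 h0)
  have hφ0 : φ 0 = 1 := by
    rw [hφ]
    simp only [Complex.ofReal_zero, sub_zero, Complex.one_cpow, one_mul]
    rw [binF]
    rw [tsum_eq_single 0]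
    · simp [poch_zero]
    · intro n hn
      simp [zero_pow hn]
  rw [hφ0] at hconst
  have hsum : Summable (fun n => poch a n * (x:ℂ)^n / (n.factorial : ℂ)) :=
    summable_bin a (hlt x (Set.right_mem_Icc.2 h0))
  have hval : binF a x = (1 - (x:ℂ))^(-a) := by
    have hx1 : (1 - (x:ℂ))^a * binF a x = 1 := hconst
    have hcne : (1 - (x:ℂ))^a ≠ 0 := by
      intro h
      rw [Complex.cpow_eq_zero_iff] at h
      exact hne x (Set.right_mem_Icc.2 h0) h.1
    rw [Complex.cpow_neg]
    field_simp
    linear_combination hx1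
  have := hsum.hasSum
  rwa [show (∑' n, poch a n * (x:ℂ)^n / (n.factorial : ℂ)) = binF a x from rfl, hval] at this

lemma poch_s_add_ne {s : ℂ} (hs : 0 < s.re) (n : ℕ) : s + n ≠ 0 := by
  intro h
  have h2 : (s + (n:ℂ)).re = 0 := by rw [h]; simp
  simp only [Complex.add_re, Complex.natCast_re] at h2
  have : (0:ℝ) ≤ (n:ℝ) := Nat.cast_nonneg n
  linarith

lemma V_id : ∀ (n : ℕ) (s b : ℂ), 0 < s.re →
    ∑ k ∈ Finset.range (n+1),
      poch (-b) k / (k.factorial:ℂ) * (poch (s+b) (n-k) / poch s (n-k+1))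
    = poch (1-b) n / ((n.factorial:ℂ) * (s + n)) := by
  intro n
  induction n with
  | zero =>
    intro s b hs
    simp [poch_zero, poch, Finset.prod_range_one]
  | succ n ih =>
    intro s b hs
    have hs0 : s ≠ 0 := by
      intro h; rw [h] at hs; simp at hs
    rw [Finset.sum_range_succ]
    have hlast : poch (-b) (n+1) / ((n+1).factorial:ℂ) *
        (poch (s+b) (n+1-(n+1)) / poch s (n+1-(n+1)+1))
        = poch (-b) (n+1) / ((n+1).factorial:ℂ) * (1 / s) := by
      simp [poch_zero, poch, Finset.prod_range_one]
    rw [hlast]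
    have hmain : ∑ k ∈ Finset.range (n+1),
        poch (-b) k / (k.factorial:ℂ) * (poch (s+b) (n+1-k) / poch s (n+1-k+1))
        = (s+b)/s * ∑ k ∈ Finset.range (n+1),
          poch (-b) k / (k.factorial:ℂ) * (poch ((s+1)+b) (n-k) / poch (s+1) (n-k+1)) := by
      rw [Finset.mul_sum]
      apply Finset.sum_congr rfl
      intro k hk
      have hkn : k ≤ n := Nat.lt_succ_iff.mp (Finset.mem_range.mp hk)
      have h1 : n + 1 - k = (n - k) + 1 := by omega
      rw [h1]
      rw [poch_succ' (s+b) (n-k), poch_succ' s (n-k+1)]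
      have hps : poch (s+1) (n-k+1) ≠ 0 := poch_ne_zero (by simp; linarith) _
      have : s + b + 1 = s + 1 + b := by ring
      rw [this]
      field_simp
    rw [hmain, ih (s+1) b (by simp; linarith)]
    have hfn : ((n.factorial:ℂ)) ≠ 0 := by exact_mod_cast Nat.factorial_ne_zero n
    have hfn1 : (((n+1).factorial:ℂ)) ≠ 0 := by exact_mod_cast Nat.factorial_ne_zero (n+1)
    have hsn : s + 1 + (n:ℂ) ≠ 0 := by
      have := poch_s_add_ne (s := s+1) (by simp; linarith) n
      simpa [add_assoc, add_comm, add_left_comm] using this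
    have hsn' : s + ((n:ℕ)+1:ℂ) ≠ 0 := by
      have := poch_s_add_ne hs (n+1)
      push_cast at this ⊢
      exact this
    have hp1 : poch (-b) (n+1) = (-b) * poch (1-b) n := by
      rw [poch_succ']
      congr 1
      ring_nf
    have hp2 : poch (1-b) (n+1) = poch (1-b) n * (1-b+n) := poch_succ _ _
    rw [hp1, hp2]
    have hfs : (((n+1).factorial:ℂ)) = ((n:ℂ)+1) * (n.factorial:ℂ) := by
      rw [Nat.factorial_succ]; push_cast; ring
    rw [hfs]
    have hn1 : ((n:ℂ) + 1) ≠ 0 := Nat.cast_add_one_ne_zero n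
    push_cast
    field_simp
    ring

open MeasureTheory in
lemma interchange1 (a b q : ℂ) (hb : 0 < b.re) (hq : 0 < q.re) {y : ℝ}
    (h0 : 0 < y) (h1 : y < 1) :
    ∑' n : ℕ, poch a n * (∫ t in (0:ℝ)..y, (t:ℂ)^(b+n-1) * (1-(t:ℂ))^(q-1)) / (n.factorial:ℂ)
      = ∫ t in (0:ℝ)..y, (t:ℂ)^(b-1) * (1-(t:ℂ))^(q-a-1) := by
  set f : ℕ → ℝ → ℂ :=
    fun n t => poch a n / (n.factorial:ℂ) * ((t:ℂ)^(b+n-1) * (1-(t:ℂ))^(q-1)) with hf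
  set g : ℝ → ℂ := fun t => (t:ℂ)^(b-1) * (1-(t:ℂ))^(q-1) with hg
  have hIoo : ∀ t : ℝ, t ∈ Set.Ioo 0 y → 0 < t ∧ t < 1 :=
    fun t ht => ⟨ht.1, lt_trans ht.2 h1⟩
  -- continuity facts
  have hcont : ∀ (e : ℂ) (n : ℕ), ContinuousOn (fun t : ℝ =>
      poch a n / (n.factorial:ℂ) * ((t:ℂ)^(e) * (1-(t:ℂ))^(q-1))) (Set.Ioo 0 y) := by
    intro e n t ht
    have h1t : (t:ℂ) ∈ Complex.slitPlane := by
      rw [Complex.mem_slitPlane_iff]; left; simpa using (hIoo t ht).1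
    have h2t : (1-(t:ℂ)) ∈ Complex.slitPlane := by
      rw [Complex.mem_slitPlane_iff]; left
      simp only [Complex.sub_re, Complex.one_re, Complex.ofReal_re]
      linarith [(hIoo t ht).2]
    have c1 : ContinuousAt (fun s : ℝ => ((s:ℂ))^(e)) t :=
      (continuousAt_cpow_const h1t).comp Complex.continuous_ofReal.continuousAt
    have hsubc : ContinuousAt (fun s : ℝ => 1-(s:ℂ)) t :=
      (continuous_const.sub Complex.continuous_ofReal).continuousAt
    have c2 : ContinuousAt (fun s : ℝ => (1-(s:ℂ))^(q-1)) t :=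
      ContinuousAt.comp (g := fun z : ℂ => z^(q-1)) (f := fun s : ℝ => 1-(s:ℂ))
        (continuousAt_cpow_const h2t) hsubc
    exact (continuousAt_const.mul (c1.mul c2)).continuousWithinAt
  have hmeas : ∀ n, AEStronglyMeasurable (f n) (volume.restrict (Set.Ioo 0 y)) := by
    intro n
    exact (hcont (b+n-1) n).aestronglyMeasurable measurableSet_Ioo
  -- integrability of g
  have hgi : IntegrableOn g (Set.Ioo 0 y) := by
    have hbi := Complex.betaIntegral_convergent hb hq
    have h2 : IntegrableOn g (Set.Ioc 0 1) := by
      rw [← intervalIntegrable_iff_integrableOn_Ioc_of_le zero_le_one]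
      exact hbi
    exact h2.mono_set (fun t ht => ⟨ht.1, le_of_lt (lt_of_lt_of_le ht.2 h1.le)⟩)
  have hC : (∫⁻ t in Set.Ioo 0 y, ‖g t‖₊) ≠ ⊤ := hgi.2.ne
  -- pointwise bound
  have hsplit : ∀ (n : ℕ) (t : ℝ), 0 < t →
      (t:ℂ)^(b+n-1) = (t:ℂ)^(b-1) * (t:ℂ)^(n:ℕ) := by
    intro n t ht
    have htne : (t:ℂ) ≠ 0 := by
      simpa using ne_of_gt ht
    rw [← Complex.cpow_natCast, ← Complex.cpow_add _ _ htne]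
    congr 1
    ring
  have hptw : ∀ (n : ℕ) (t : ℝ), t ∈ Set.Ioo 0 y →
      ‖f n t‖ ≤ (‖poch a n‖ * y^n / n.factorial) * ‖g t‖ := by
    intro n t ht
    rw [hf, hg]
    simp only
    rw [hsplit n t ht.1]
    have hfn : (0:ℝ) < (n.factorial:ℝ) := by positivity
    have e1 : ‖poch a n / ((n.factorial:ℕ):ℂ) * ((t:ℂ)^(b-1) * (t:ℂ)^(n:ℕ)
        * (1-(t:ℂ))^(q-1))‖
        = ‖poch a n‖ / (n.factorial:ℝ) * (t^n *
          (‖(t:ℂ)^(b-1)‖ * ‖(1-(t:ℂ))^(q-1)‖)) := by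
      rw [norm_mul, norm_div, norm_mul, norm_mul, norm_pow]
      rw [Complex.norm_natCast, Complex.norm_real, Real.norm_eq_abs,
        _root_.abs_of_nonneg ht.1.le]
      ring
    rw [e1, norm_mul]
    have ht_le : t^n ≤ y^n := pow_le_pow_left₀ ht.1.le ht.2.le n
    calc ‖poch a n‖ / (n.factorial:ℝ) * (t^n * (‖(t:ℂ)^(b-1)‖ * ‖(1-(t:ℂ))^(q-1)‖))
        ≤ ‖poch a n‖ / (n.factorial:ℝ) * (y^n * (‖(t:ℂ)^(b-1)‖ * ‖(1-(t:ℂ))^(q-1)‖)) := by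
          gcongr
      _ = ‖poch a n‖ * y^n / n.factorial * (‖(t:ℂ)^(b-1)‖ * ‖(1-(t:ℂ))^(q-1)‖) := by ring
  have hcoeff : Summable (fun n => ‖poch a n‖ * y^n / n.factorial) :=
    summable_norm_poch a h0 h1
  have hlint : ∑' n, ∫⁻ t in Set.Ioo 0 y, ‖f n t‖₊ ≠ ⊤ := by
    have hb1 : ∀ n, ∫⁻ t in Set.Ioo 0 y, ‖f n t‖₊
        ≤ ENNReal.ofReal (‖poch a n‖ * y^n / n.factorial) * ∫⁻ t in Set.Ioo 0 y, ‖g t‖₊ := by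
      intro n
      rw [← MeasureTheory.lintegral_const_mul' _ _ ENNReal.ofReal_ne_top]
      refine MeasureTheory.lintegral_mono_ae ((MeasureTheory.ae_restrict_iff'
        measurableSet_Ioo).mpr (Filter.Eventually.of_forall (fun t ht => ?_)))
      rw [show (‖f n t‖₊ : ENNReal) = ENNReal.ofReal ‖f n t‖ from (ofReal_norm _).symm,
        show (‖g t‖₊ : ENNReal) = ENNReal.ofReal ‖g t‖ from (ofReal_norm _).symm,
        ← ENNReal.ofReal_mul (by positivity)]
      exact ENNReal.ofReal_le_ofReal (hptw n t ht)
    refine ne_top_of_le_ne_top ?_ (ENNReal.tsum_le_tsum hb1)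
    rw [ENNReal.tsum_mul_right]
    apply ENNReal.mul_ne_top _ hC
    rw [← ENNReal.ofReal_tsum_of_nonneg (fun n => by positivity) hcoeff]
    exact ENNReal.ofReal_ne_top
  have key := MeasureTheory.integral_tsum hmeas hlint
  -- identify the sum inside
  have hin : ∀ t : ℝ, t ∈ Set.Ioo 0 y →
      ∑' n, f n t = (t:ℂ)^(b-1) * (1-(t:ℂ))^(q-a-1) := by
    intro t ht
    have hbin := hasSum_binomial a (hIoo t ht).1.le (hIoo t ht).2
    have hK := hbin.mul_left ((t:ℂ)^(b-1) * (1-(t:ℂ))^(q-1))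
    have hterm : ∀ n : ℕ, (t:ℂ)^(b-1) * (1-(t:ℂ))^(q-1)
        * (poch a n * (t:ℂ)^(n:ℕ) / (n.factorial:ℂ)) = f n t := by
      intro n
      rw [hf]
      simp only
      rw [hsplit n t ht.1]
      ring
    have hne1t : (1-(t:ℂ)) ≠ 0 := by
      intro h
      have h2 : (1 - (t:ℂ)).re = 0 := by rw [h]; simp
      simp only [Complex.sub_re, Complex.one_re, Complex.ofReal_re] at h2
      linarith [(hIoo t ht).2]
    have hval : (t:ℂ)^(b-1) * (1-(t:ℂ))^(q-1) * (1-(t:ℂ))^(-a)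
        = (t:ℂ)^(b-1) * (1-(t:ℂ))^(q-a-1) := by
      rw [mul_assoc, ← Complex.cpow_add _ _ hne1t]
      congr 2
      ring
    rw [← hval]
    refine HasSum.tsum_eq ?_
    exact (hK.congr_fun (fun n => (hterm n).symm))
  -- put together
  have lhs_eq : ∀ n : ℕ, poch a n * (∫ t in (0:ℝ)..y, (t:ℂ)^(b+n-1) * (1-(t:ℂ))^(q-1))
      / (n.factorial:ℂ) = ∫ t in Set.Ioo 0 y, f n t := by
    intro n
    rw [intervalIntegral.integral_of_le h0.le, MeasureTheory.integral_Ioc_eq_integral_Ioo]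
    rw [hf]
    simp only
    rw [MeasureTheory.integral_const_mul]
    ring
  calc ∑' n : ℕ, poch a n * (∫ t in (0:ℝ)..y, (t:ℂ)^(b+n-1) * (1-(t:ℂ))^(q-1))
        / (n.factorial:ℂ)
      = ∑' n, ∫ t in Set.Ioo 0 y, f n t := by
        exact tsum_congr lhs_eq
    _ = ∫ t in Set.Ioo 0 y, ∑' n, f n t := key.symm
    _ = ∫ t in Set.Ioo 0 y, (t:ℂ)^(b-1) * (1-(t:ℂ))^(q-a-1) :=
        MeasureTheory.setIntegral_congr_fun measurableSet_Ioo (fun t ht => hin t ht)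
    _ = ∫ t in (0:ℝ)..y, (t:ℂ)^(b-1) * (1-(t:ℂ))^(q-a-1) := by
        rw [intervalIntegral.integral_of_le h0.le, MeasureTheory.integral_Ioc_eq_integral_Ioo]

lemma tail_eq (b p : ℂ) (hb : 0 < b.re) (hp : 0 < p.re) {y : ℝ} (h0 : 0 < y) (h1 : y < 1) :
    ∫ t in y..(1:ℝ), (t:ℂ)^(b-1) * (1-(t:ℂ))^(p-1)
    = ∑' n : ℕ, poch (1-b) n * (((1-y:ℝ):ℂ)^(p+n) / (p+n)) / (n.factorial:ℂ) := by
  set w : ℝ := 1 - y with hw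
  have hw0 : 0 < w := by rw [hw]; linarith
  have hw1 : w < 1 := by rw [hw]; linarith
  set f : ℝ → ℂ := fun u => (1-(u:ℂ))^(b-1) * ((u:ℂ))^(p-1) with hf
  have e : ∀ x : ℝ, (x:ℂ)^(b-1) * (1-(x:ℂ))^(p-1) = f (1 - x) := by
    intro x
    rw [hf]
    simp only
    push_cast
    rw [show (1:ℂ) - (1 - (x:ℂ)) = (x:ℂ) by ring]
  have step1 : ∫ t in y..(1:ℝ), (t:ℂ)^(b-1) * (1-(t:ℂ))^(p-1) = ∫ u in (0:ℝ)..w, f u := by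
    rw [show (fun t:ℝ => (t:ℂ)^(b-1) * (1-(t:ℂ))^(p-1)) = fun t:ℝ => f (1-t) from funext e]
    have := intervalIntegral.integral_comp_sub_left (a := y) (b := 1) f 1
    rw [this]
    norm_num
    rfl
  have hq1 : 0 < (1:ℂ).re := by simp
  have step2 := interchange1 (1-b) p 1 hp hq1 hw0 hw1
  have rhs_eq : ∫ u in (0:ℝ)..w, (u:ℂ)^(p-1) * (1-(u:ℂ))^(1-(1-b)-1) = ∫ u in (0:ℝ)..w, f u := by
    apply intervalIntegral.integral_congr
    intro u _
    rw [hf]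
    simp only
    rw [show (1:ℂ)-(1-b)-1 = b - 1 by ring]
    ring
  have lhs_eq : ∀ n : ℕ,
      poch (1-b) n * (∫ u in (0:ℝ)..w, (u:ℂ)^(p+n-1) * (1-(u:ℂ))^((1:ℂ)-1)) / (n.factorial:ℂ)
      = poch (1-b) n * (((w:ℝ):ℂ)^(p+n) / (p+n)) / (n.factorial:ℂ) := by
    intro n
    congr 2
    have hpn : p + (n:ℂ) ≠ 0 := poch_s_add_ne hp n
    have hint : ∫ u in (0:ℝ)..w, (u:ℂ)^(p+n-1) * (1-(u:ℂ))^((1:ℂ)-1)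
        = ∫ u in (0:ℝ)..w, (u:ℂ)^(p+n-1) := by
      apply intervalIntegral.integral_congr
      intro u _
      norm_num
    rw [hint, integral_cpow]
    · rw [show p+(n:ℂ)-1+1 = p+n by ring]
      rw [Complex.ofReal_zero, Complex.zero_cpow hpn]
      ring
    · left
      simp only [Complex.sub_re, Complex.add_re, Complex.one_re, Complex.natCast_re]
      have : (0:ℝ) ≤ (n:ℝ) := Nat.cast_nonneg n
      linarith
  rw [step1, ← rhs_eq, ← step2]
  exact tsum_congr lhs_eq

lemma factorial_le_norm_poch (p : ℂ) (hp : 0 ≤ p.re) (m : ℕ) :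
    (m.factorial : ℝ) ≤ ‖poch (p+1) m‖ := by
  rw [poch, norm_prod]
  have h1 : (m.factorial : ℝ) = ∏ i ∈ Finset.range m, ((i:ℝ)+1) := by
    rw [← Finset.prod_range_add_one_eq_factorial]
    push_cast
    ring
  rw [h1]
  apply Finset.prod_le_prod (fun i _ => by positivity)
  intro i _
  calc (i:ℝ)+1 ≤ (p+1+(i:ℂ)).re := by
        simp only [Complex.add_re, Complex.one_re, Complex.natCast_re]
        linarith
    _ ≤ ‖p+1+(i:ℂ)‖ := by
        exact Complex.re_le_norm _

lemma euler_transform (b p : ℂ) (hp : 0 < p.re) {w : ℝ} (h0 : 0 < w) (h1 : w < 1) :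
    ∑' n : ℕ, poch (1-b) n * ((w:ℂ)^n / (p+(n:ℂ))) / (n.factorial:ℂ)
    = (1-(w:ℂ))^(-(-b)) * ∑' n : ℕ, poch (p+b) n * (w:ℂ)^n / (p * poch (p+1) n) := by
  have hpne : p ≠ 0 := fun h => by rw [h] at hp; simp at hp
  have hWn : ‖(w:ℂ)‖ < 1 := by
    rw [Complex.norm_real, Real.norm_eq_abs, _root_.abs_of_pos h0]; exact h1
  have hA : Summable (fun k => ‖poch (-b) k * (w:ℂ)^k / (k.factorial:ℂ)‖) :=
    summable_norm_bin (-b) hWn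
  have hBle : ∀ m : ℕ, ‖poch (p+b) m * (w:ℂ)^m / (p * poch (p+1) m)‖
      ≤ ‖p‖⁻¹ * (‖poch (p+b) m‖ * w^m / m.factorial) := by
    intro m
    rw [norm_div, norm_mul, norm_mul, norm_pow, Complex.norm_real, Real.norm_eq_abs,
      _root_.abs_of_pos h0, div_eq_mul_inv, mul_inv]
    have hfm : (0:ℝ) < (m.factorial:ℝ) := by positivity
    have hnp : (0:ℝ) < ‖p‖ := by simpa [norm_pos_iff] using hpne
    have h2 : ‖poch (p+1) m‖⁻¹ ≤ ((m.factorial:ℝ))⁻¹ := by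
      apply inv_anti₀ hfm
      exact factorial_le_norm_poch p hp.le m
    calc ‖poch (p+b) m‖ * w^m * (‖p‖⁻¹ * ‖poch (p+1) m‖⁻¹)
        ≤ ‖poch (p+b) m‖ * w^m * (‖p‖⁻¹ * ((m.factorial:ℝ))⁻¹) := by
          gcongr
      _ = ‖p‖⁻¹ * (‖poch (p+b) m‖ * w^m / m.factorial) := by ring
  have hB : Summable (fun m => ‖poch (p+b) m * (w:ℂ)^m / (p * poch (p+1) m)‖) := by
    refine Summable.of_nonneg_of_le (fun m => norm_nonneg _) hBle ?_
    exact (summable_norm_poch (p+b) h0 h1).mul_left _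
  have hbinval := (hasSum_binomial (-b) (x := w) h0.le h1).tsum_eq
  rw [← hbinval, tsum_mul_tsum_eq_tsum_sum_range_of_summable_norm hA hB]
  apply tsum_congr
  intro n
  have hsum_eq : ∑ k ∈ Finset.range (n+1),
      poch (-b) k * (w:ℂ)^k / (k.factorial:ℂ)
        * (poch (p+b) (n-k) * (w:ℂ)^(n-k) / (p * poch (p+1) (n-k)))
      = (w:ℂ)^n * ∑ k ∈ Finset.range (n+1),
        poch (-b) k / (k.factorial:ℂ) * (poch (p+b) (n-k) / poch p ((n-k)+1)) := by
    rw [Finset.mul_sum]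
    apply Finset.sum_congr rfl
    intro k hk
    have hkn : k ≤ n := Nat.lt_succ_iff.mp (Finset.mem_range.mp hk)
    rw [poch_succ' p (n-k)]
    have hw : (w:ℂ)^k * (w:ℂ)^(n-k) = (w:ℂ)^n := by
      rw [← pow_add]
      congr 1
      omega
    rw [← hw]
    ring
  rw [hsum_eq, V_id n p b hp]
  have hpn : p + (n:ℂ) ≠ 0 := poch_s_add_ne hp n
  have hfn : ((n.factorial:ℕ):ℂ) ≠ 0 := by exact_mod_cast Nat.factorial_ne_zero n
  field_simp

lemma Gamma_ne_zero_re_pos {s : ℂ} (h : 0 < s.re) : Complex.Gamma s ≠ 0 := by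
  apply Complex.Gamma_ne_zero
  intro m hm
  rw [hm] at h
  simp only [Complex.neg_re, Complex.natCast_re] at h
  have : (0:ℝ) ≤ (m:ℝ) := Nat.cast_nonneg m
  linarith

theorem stmt8 (a b c : ℂ) (y : ℝ) (hcab : 0 < (c - a - b).re)
    (hb : 0 < b.re) (hbc : b.re < c.re) (hy0 : 0 < y) (hy1 : y < 1) :
    inc2F1L a b c y 1 =
      Complex.Gamma c * Complex.Gamma (c - a - b) /
        (Complex.Gamma (c - a) * Complex.Gamma (c - b)) -
      ((1 - (y:ℂ))^(c - b - a) * (y:ℂ)^b /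
        (Complex.betaIntegral b (c - b) * (c - a - b))) *
      hyp2F1 (c - a) 1 (1 + c - b - a) (1 - (y:ℂ)) := by
  set p := c - a - b with hp_def
  set B := Complex.betaIntegral b (c-b) with hB_def
  set W : ℂ := ((1-y:ℝ):ℂ) with hW_def
  have hp : 0 < p.re := hcab
  have hq : 0 < (c-b).re := by
    rw [Complex.sub_re]; linarith
  have hpne : p ≠ 0 := fun h => by rw [h] at hp; simp at hp
  have hWne : W ≠ 0 := by
    rw [hW_def]
    simp only [ne_eq, Complex.ofReal_eq_zero]
    intro h; linarith
  -- Step 1: pull out 1/B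
  have h1t : inc2F1L a b c y 1
      = B⁻¹ * ∑' n : ℕ, poch a n * (∫ t in (0:ℝ)..y, (t:ℂ)^(b+n-1) * (1-(t:ℂ))^(c-b-1))
          / (n.factorial:ℂ) := by
    rw [inc2F1L, ← tsum_mul_left]
    apply tsum_congr
    intro n
    rw [ipochL, incBeta, ← hB_def]
    ring
  -- Step 2: interchange
  have h2t := interchange1 a b (c-b) hb hq hy0 hy1
  -- Step 3: exponent rewrite and split
  have hexp : (∫ t in (0:ℝ)..y, (t:ℂ)^(b-1) * (1-(t:ℂ))^(c-b-a-1))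
      = ∫ t in (0:ℝ)..y, (t:ℂ)^(b-1) * (1-(t:ℂ))^(p-1) := by
    have h' : c-b-a-1 = p-1 := by rw [hp_def]; ring
    rw [h']
  have hbi := Complex.betaIntegral_convergent hb hp
  have hsub1 : Set.uIcc (0:ℝ) y ⊆ Set.uIcc (0:ℝ) 1 := by
    rw [Set.uIcc_of_le hy0.le, Set.uIcc_of_le zero_le_one]
    exact Set.Icc_subset_Icc le_rfl hy1.le
  have hsub2 : Set.uIcc y (1:ℝ) ⊆ Set.uIcc (0:ℝ) 1 := by
    rw [Set.uIcc_of_le hy1.le, Set.uIcc_of_le zero_le_one]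
    exact Set.Icc_subset_Icc hy0.le le_rfl
  have hsplit : (∫ t in (0:ℝ)..y, (t:ℂ)^(b-1) * (1-(t:ℂ))^(p-1))
      = Complex.betaIntegral b p - ∫ t in y..(1:ℝ), (t:ℂ)^(b-1) * (1-(t:ℂ))^(p-1) := by
    have hadj := intervalIntegral.integral_add_adjacent_intervals
      (hbi.mono_set hsub1) (hbi.mono_set hsub2)
    rw [Complex.betaIntegral, ← hadj]
    ring
  -- Step 4: tail series
  have hT := tail_eq b p hb hp hy0 hy1
  -- Step 5: pull out W^p
  have hsplitW : ∀ n : ℕ, W^(p+(n:ℂ)) = W^p * W^n := by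
    intro n
    rw [hW_def, Complex.cpow_add _ _ hWne, Complex.cpow_natCast]
  have h5 : (∑' n : ℕ, poch (1-b) n * (W^(p+(n:ℂ)) / (p+(n:ℂ))) / (n.factorial:ℂ))
      = W^p * ∑' n : ℕ, poch (1-b) n * (W^n / (p+(n:ℂ))) / (n.factorial:ℂ) := by
    rw [← tsum_mul_left]
    apply tsum_congr
    intro n
    rw [hsplitW n]
    ring
  -- Step 6: Euler transform
  have h6 := euler_transform b p hp (w := 1-y) (by linarith) (by linarith)
  have hyW : (1:ℂ) - W = (y:ℂ) := by rw [hW_def]; push_cast; ring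
  rw [hyW, neg_neg] at h6
  -- Step 7: pull out p⁻¹
  have h7 : (∑' n : ℕ, poch (p+b) n * W^n / (p * poch (p+1) n))
      = p⁻¹ * ∑' n : ℕ, poch (p+b) n * W^n / poch (p+1) n := by
    rw [← tsum_mul_left]
    apply tsum_congr
    intro n
    rw [div_eq_mul_inv, div_eq_mul_inv, mul_inv]
    ring
  -- Step 8: hyp2F1 rewrite
  have h8 : hyp2F1 (c-a) 1 (1+c-b-a) (1-(y:ℂ))
      = ∑' n : ℕ, poch (p+b) n * W^n / poch (p+1) n := by
    rw [hyp2F1]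
    apply tsum_congr
    intro n
    have e1 : c - a = p + b := by rw [hp_def]; ring
    have e2 : (1:ℂ)+c-b-a = p+1 := by rw [hp_def]; ring
    have e3 : 1-(y:ℂ) = W := by rw [hW_def]; push_cast; ring
    rw [e1, e2, e3, poch_one]
    have hfn : ((n.factorial:ℕ):ℂ) ≠ 0 := by exact_mod_cast Nat.factorial_ne_zero n
    have h9 : poch (p+b) n * (n.factorial:ℂ) / poch (p+1) n * W^n / (n.factorial:ℂ)
        = poch (p+b) n * W^n / poch (p+1) n * ((n.factorial:ℂ) / (n.factorial:ℂ)) := by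
      ring
    rw [h9, div_self hfn, mul_one]
  -- Gamma relations
  have hGb := Gamma_ne_zero_re_pos hb
  have hGp := Gamma_ne_zero_re_pos hp
  have hGc : Complex.Gamma c ≠ 0 := Gamma_ne_zero_re_pos (by linarith)
  have hGcb := Gamma_ne_zero_re_pos hq
  have hGca : Complex.Gamma (c-a) ≠ 0 := by
    apply Gamma_ne_zero_re_pos
    have h' : 0 < (c-a-b).re := by rw [← hp_def]; exact hcab
    simp only [Complex.sub_re] at h' ⊢
    linarith
  have hbeta1 : Complex.Gamma b * Complex.Gamma p
      = Complex.Gamma (c-a) * Complex.betaIntegral b p := by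
    have h' := Complex.Gamma_mul_Gamma_eq_betaIntegral hb hp
    rwa [show b + p = c - a by rw [hp_def]; ring] at h'
  have hbeta2 : Complex.Gamma b * Complex.Gamma (c-b) = Complex.Gamma c * B := by
    have h' := Complex.Gamma_mul_Gamma_eq_betaIntegral hb hq
    rwa [show b + (c-b) = c by ring] at h'
  have hBne : B ≠ 0 := by
    intro h
    rw [h, mul_zero] at hbeta2
    exact (mul_ne_zero hGb hGcb) hbeta2
  have hbp : Complex.betaIntegral b p
      = Complex.Gamma b * Complex.Gamma p / Complex.Gamma (c-a) := by
    rw [eq_div_iff hGca]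
    linear_combination -hbeta1
  have hBv : B = Complex.Gamma b * Complex.Gamma (c-b) / Complex.Gamma c := by
    rw [eq_div_iff hGc]
    linear_combination -hbeta2
  have hratio : B⁻¹ * Complex.betaIntegral b p
      = Complex.Gamma c * Complex.Gamma p / (Complex.Gamma (c-a) * Complex.Gamma (c-b)) := by
    rw [hbp, hBv]
    field_simp
  -- Final assembly
  have e4 : (1:ℂ) - (y:ℂ) = W := by rw [hW_def]; push_cast; ring
  have e5 : c - b - a = p := by rw [hp_def]; ring
  rw [h1t, h2t, hexp, hsplit, hT, h5, h6, h7, h8, e4, e5]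
  rw [mul_sub, hratio]
  congr 1
  rw [div_eq_mul_inv, mul_inv]
  ring
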